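/- Let U ⊆ X be open convex and f ∈ C^{1u}(U,Y). If f′ takes U-bounded weakly p-compact subsets of U into relatively compact subsets of K(X,Y), then f is p-convergent: for every U-bounded sequence (x_n) in U weakly p-convergent to x ∈ U, f(x_n) → f(x) in norm. -/

import Mathlib

open Filter Topology Metric Set
open scoped ENNReal NNReal

section Defs

variable {X Y : Type*} [NormedAddCommGroup X] [NormedSpace ℝ X]
  [NormedAddCommGroup Y] [NormedSpace ℝ Y]

/-- A sequence `(x n)` in `X` is weakly `p`-summable if `(f (x n))ₙ ∈ ℓ_p` for every
continuous linear functional `f` (for `p = ∞`, this means `(f (x n))ₙ ∈ c₀`). -/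
def WeaklyLpSummable (p : ℝ≥0∞) (x : ℕ → X) : Prop :=
  ∀ f : X →L[ℝ] ℝ,
    if p = ⊤ then Filter.Tendsto (fun n => f (x n)) Filter.atTop (nhds 0)
    else Memℓp (fun n => f (x n)) p

/-- A sequence is weakly `p`-Cauchy if all difference sequences along pairs of strictly
monotone index sequences are weakly `p`-summable. -/
def WeaklyLpCauchy (p : ℝ≥0∞) (x : ℕ → X) : Prop :=
  ∀ m k : ℕ → ℕ, StrictMono m → StrictMono k →
    WeaklyLpSummable p (fun i => x (m i) - x (k i))

/-- `(x n)` is weakly `p`-convergent to `x₀` if `(x n - x₀)` is weakly `p`-summable. -/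
def WeaklyLpConvergentTo (p : ℝ≥0∞) (x : ℕ → X) (x₀ : X) : Prop :=
  WeaklyLpSummable p (fun n => x n - x₀)

/-- A set `K ⊆ L(X,Y)` is uniformly `p`-convergent if `lim_n sup_{T ∈ K} ‖T (x n)‖ = 0`
for every weakly `p`-summable sequence `(x n)`. -/
def UniformlyPConvergent (p : ℝ≥0∞) (K : Set (X →L[ℝ] Y)) : Prop :=
  ∀ x : ℕ → X, WeaklyLpSummable p x →
    ∀ ε > 0, ∃ N : ℕ, ∀ n ≥ N, ∀ T ∈ K, ‖T (x n)‖ < ε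

/-- `B` is `U`-bounded: contained in `U`, bounded, and at positive distance from `∂U`. -/
def UBounded (U B : Set X) : Prop :=
  B ⊆ U ∧ Bornology.IsBounded B ∧ ∃ r > 0, ∀ b ∈ B, Metric.ball b r ⊆ U

/-- A sequence is `U`-bounded if its range is a `U`-bounded set. -/
def UBoundedSeq (U : Set X) (x : ℕ → X) : Prop :=
  UBounded U (Set.range x)

/-- `f ∈ C^{1u}(U,Y)`: `f` is differentiable on `U` with derivative `f'` which is
uniformly continuous on `U`-bounded subsets of `U`. -/
def C1u (U : Set X) (f : X → Y) (f' : X → X →L[ℝ] Y) : Prop :=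
  (∀ x ∈ U, HasFDerivAt f (f' x) x) ∧
  ∀ B : Set X, UBounded U B → UniformContinuousOn f' B

/-- `T` is a `p`-convergent operator: it maps weakly `p`-summable sequences to norm-null
sequences. -/
def PConvergentOp (p : ℝ≥0∞) (T : X →L[ℝ] Y) : Prop :=
  ∀ x : ℕ → X, WeaklyLpSummable p x →
    Filter.Tendsto (fun n => ‖T (x n)‖) Filter.atTop (nhds 0)

/-- `f` is weakly `p`-sequentially continuous on `U`: it maps `U`-bounded weakly
`p`-Cauchy sequences to norm convergent sequences. -/
def WeaklyPSeqCont (p : ℝ≥0∞) (U : Set X) (f : X → Y) : Prop :=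
  ∀ x : ℕ → X, UBoundedSeq U x → WeaklyLpCauchy p x →
    ∃ l : Y, Filter.Tendsto (fun n => f (x n)) Filter.atTop (nhds l)

/-- `K` is weakly `p`-precompact: every sequence in `K` has a weakly `p`-Cauchy
subsequence. -/
def WeaklyPPrecompact (p : ℝ≥0∞) (K : Set X) : Prop :=
  ∀ x : ℕ → X, (∀ n, x n ∈ K) →
    ∃ m : ℕ → ℕ, StrictMono m ∧ WeaklyLpCauchy p (fun i => x (m i))

end Defs

section Aux

open scoped Pointwise

variable {X Y : Type*} [NormedAddCommGroup X] [NormedSpace ℝ X]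
  [NormedAddCommGroup Y] [NormedSpace ℝ Y]

/-- A real sequence in `ℓ_p`, `1 ≤ p < ∞`, tends to zero. -/
lemma memLp_tendsto_zero {p : ℝ≥0∞} (hp : 1 ≤ p) (hp' : p ≠ ⊤) {u : ℕ → ℝ}
    (hu : Memℓp u p) : Tendsto u atTop (𝓝 0) := by
  have hq : 0 < p.toReal := ENNReal.toReal_pos (lt_of_lt_of_le zero_lt_one hp).ne' hp'
  have hs : Summable fun n => ‖u n‖ ^ p.toReal := hu.summable hq
  have h0 : Tendsto (fun n => ‖u n‖ ^ p.toReal) atTop (𝓝 0) := hs.tendsto_atTop_zero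
  have h1 : Tendsto (fun n => (‖u n‖ ^ p.toReal) ^ (p.toReal)⁻¹) atTop (𝓝 0) := by
    have hc : ContinuousAt (fun y : ℝ => y ^ (p.toReal)⁻¹) 0 :=
      Real.continuousAt_rpow_const 0 _ (Or.inr (by positivity))
    have := hc.tendsto.comp h0
    simpa [Function.comp_def, Real.zero_rpow (by positivity : (p.toReal)⁻¹ ≠ 0)] using this
  have h2 : Tendsto (fun n => ‖u n‖) atTop (𝓝 0) := by
    refine h1.congr fun n => ?_
    rw [← Real.rpow_mul (norm_nonneg _), mul_inv_cancel₀ hq.ne', Real.rpow_one]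
  simpa using tendsto_zero_iff_norm_tendsto_zero.2 h2

/-- `f'` in `C^{1u}` is continuous at every point of the open set `U`. -/
lemma C1u.continuousAt {U : Set X} (hU : IsOpen U) {f : X → Y} {f' : X → X →L[ℝ] Y}
    (hf : C1u U f f') {z : X} (hz : z ∈ U) : ContinuousAt f' z := by
  obtain ⟨ε, hε, hball⟩ := Metric.isOpen_iff.1 hU z hz
  have hUB : UBounded U (Metric.ball z (ε / 2)) := by
    refine ⟨(Metric.ball_subset_ball (by linarith)).trans hball,
      Metric.isBounded_ball, ε / 2, by linarith, fun b hb y hy => ?_⟩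
    apply hball
    have : dist y z < ε := by
      calc dist y z ≤ dist y b + dist b z := dist_triangle _ _ _
        _ < ε / 2 + ε / 2 := by
            exact add_lt_add (Metric.mem_ball.1 hy) (Metric.mem_ball.1 hb)
        _ = ε := by ring
    exact Metric.mem_ball.2 this
  exact ((hf.2 _ hUB).continuousOn).continuousAt
    (Metric.ball_mem_nhds z (by linarith))

/-- A compact operator maps bounded weakly null sequences to norm null sequences. -/
lemma isCompactOperator_completely_continuous [CompleteSpace Y]
    {T : X →L[ℝ] Y} (hT : IsCompactOperator T) {h : ℕ → X} {M : ℝ}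
    (hM : ∀ n, ‖h n‖ ≤ M)
    (hw : ∀ g : X →L[ℝ] ℝ, Tendsto (fun n => g (h n)) atTop (𝓝 0)) :
    Tendsto (fun n => ‖T (h n)‖) atTop (𝓝 0) := by
  rw [← tendsto_zero_iff_norm_tendsto_zero]
  obtain ⟨K0, hK0, hnhds⟩ := hT
  obtain ⟨r, hr, hrsub⟩ := Metric.mem_nhds_iff.1 hnhds
  have hM1 : (0:ℝ) < M + 1 := lt_of_le_of_lt (le_trans (norm_nonneg _) (hM 0)) (by linarith)
  set s : ℝ := r / (2 * (M + 1)) with hs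
  have hspos : 0 < s := by positivity
  have hmem : ∀ n, T (h n) ∈ (s⁻¹ • K0 : Set Y) := by
    intro n
    have h1 : s • h n ∈ Metric.ball (0 : X) r := by
      rw [Metric.mem_ball, dist_zero_right, norm_smul, Real.norm_eq_abs,
        abs_of_pos hspos]
      calc s * ‖h n‖ ≤ s * (M + 1) := by
            exact mul_le_mul_of_nonneg_left (le_trans (hM n) (by linarith)) hspos.le
        _ = r / 2 := by rw [hs, div_mul_eq_mul_div, mul_div_mul_right r 2 hM1.ne']
        _ < r := by linarith
    have h2 : T (s • h n) ∈ K0 := hrsub h1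
    refine ⟨T (s • h n), h2, ?_⟩
    simp [map_smul, smul_smul, inv_mul_cancel₀ hspos.ne']
  have hK : IsCompact ((s⁻¹ • K0 : Set Y)) := hK0.smul s⁻¹
  by_contra hc
  rw [Metric.tendsto_atTop] at hc
  push_neg at hc
  obtain ⟨ε, hε, hfreq⟩ := hc
  obtain ⟨φ, hφ, hφε⟩ := Nat.exists_strictMono_subsequence (fun N => by
    obtain ⟨n, hn, hd⟩ := hfreq (N + 1)
    exact ⟨n, by omega, hd⟩)
  obtain ⟨y, _, ψ, hψ, hlim⟩ := hK.tendsto_subseq (x := fun n => T (h (φ n))) (fun n => hmem _)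
  have hy0 : y = 0 := by
    apply NormedSpace.eq_zero_of_forall_dual_eq_zero ℝ
    intro g
    have h1 : Tendsto (fun n => g (T (h (φ (ψ n))))) atTop (𝓝 (g y)) :=
      (g.continuous.tendsto y).comp hlim
    have h2 : Tendsto (fun n => (g.comp T) (h (φ (ψ n)))) atTop (𝓝 0) :=
      (hw (g.comp T)).comp ((hφ.comp hψ).tendsto_atTop)
    exact tendsto_nhds_unique h1 h2
  rw [hy0] at hlim
  have := (hlim.eventually (Metric.ball_mem_nhds (0:Y) hε)).exists
  obtain ⟨n, hn⟩ := this
  have h3 := hφε (ψ n)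
  simp only [Function.comp_apply, Metric.mem_ball, dist_zero_right] at hn
  rw [dist_zero_right] at h3
  linarith

end Aux

/-- If `f' ` maps `U`-bounded weakly `p`-compact subsets of `U` (sequences weakly
`p`-convergent in `U` together with their limits) into relatively compact subsets of
`K(X,Y)`, then `f` is `p`-convergent. -/
theorem deriv_compact_imp_f_pConvergent
    {X Y : Type*} [NormedAddCommGroup X] [NormedSpace ℝ X] [CompleteSpace X]
    [NormedAddCommGroup Y] [NormedSpace ℝ Y] [CompleteSpace Y]
    (p : ℝ≥0∞) (hp : 1 ≤ p) (hp' : p ≠ ⊤)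
    (U : Set X) (hU : IsOpen U) (hUc : Convex ℝ U)
    (f : X → Y) (f' : X → X →L[ℝ] Y) (hf : C1u U f f')
    (H : ∀ (c : ℕ → X) (c₀ : X), c₀ ∈ U → UBounded U (Set.range c ∪ {c₀}) →
      WeaklyLpConvergentTo p c c₀ →
      (∀ z ∈ Set.range c ∪ {c₀}, IsCompactOperator (f' z)) ∧
      IsCompact (closure (f' '' (Set.range c ∪ {c₀})))) :
    ∀ (x : ℕ → X) (x₀ : X), x₀ ∈ U → UBoundedSeq U x →
      WeaklyLpConvergentTo p x x₀ →
      Filter.Tendsto (fun n => f (x n)) Filter.atTop (nhds (f x₀)) := by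
  intro x x₀ hx₀U hxB hxw
  obtain ⟨hsubU, hbdd, r, hrpos, hr⟩ := hxB
  -- bound on the sequence
  obtain ⟨R, hR⟩ := hbdd.exists_norm_le
  set h : ℕ → X := fun n => x n - x₀ with hh
  have hMbd : ∀ n, ‖h n‖ ≤ R + ‖x₀‖ := fun n => by
    calc ‖x n - x₀‖ ≤ ‖x n‖ + ‖x₀‖ := norm_sub_le _ _
      _ ≤ R + ‖x₀‖ := by
          have := hR (x n) (mem_range_self n); linarith
  set M : ℝ := R + ‖x₀‖ + 1 with hM
  have hMpos : 0 < M := by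
    have := le_trans (norm_nonneg (h 0)) (hMbd 0); positivity
  have hMb : ∀ n, ‖h n‖ ≤ M := fun n => le_trans (hMbd n) (by linarith)
  -- weak convergence facts
  have hmemlp : ∀ g : X →L[ℝ] ℝ, Memℓp (fun n => g (h n)) p := by
    intro g
    have := hxw g
    rwa [if_neg hp'] at this
  have hw : ∀ g : X →L[ℝ] ℝ, Tendsto (fun n => g (h n)) atTop (𝓝 0) := fun g =>
    memLp_tendsto_zero hp hp' (hmemlp g)
  -- ball around x₀
  obtain ⟨r₀, hr₀pos, hr₀⟩ := Metric.isOpen_iff.1 hU x₀ hx₀U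
  set r' : ℝ := min r r₀ with hr'
  have hr'pos : 0 < r' := lt_min hrpos hr₀pos
  -- points on segments lie in U
  have hzU : ∀ (n : ℕ), ∀ t ∈ Icc (0:ℝ) 1, x₀ + t • h n ∈ U := by
    intro n t ht
    have hid : x₀ + t • h n = (1 - t) • x₀ + t • x n := by
      rw [hh]; rw [smul_sub, sub_smul, one_smul]; abel
    rw [hid]
    exact hUc hx₀U (hsubU (mem_range_self n)) (by linarith [ht.2]) ht.1 (by ring)
  -- continuity of f' on U
  have hf'cont : ∀ z ∈ U, ContinuousAt f' z := fun z hz => hf.continuousAt hU hz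
  -- continuity of t ↦ ‖f' (x₀ + t • h n) (h n)‖ on Icc 0 1
  have hφcont : ∀ n : ℕ, ContinuousOn (fun t : ℝ => ‖(f' (x₀ + t • h n)) (h n)‖)
      (Icc (0:ℝ) 1) := by
    intro n
    intro t ht
    have hin : ContinuousAt (fun t : ℝ => x₀ + t • h n) t :=
      (continuousAt_id.smul continuousAt_const).const_add x₀
    have h1 : ContinuousAt (fun t : ℝ => f' (x₀ + t • h n)) t :=
      ContinuousAt.comp (f := fun t : ℝ => x₀ + t • h n) (hf'cont _ (hzU n t ht)) hin
    have h2 : ContinuousAt (fun t : ℝ => (f' (x₀ + t • h n)) (h n)) t := by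
      have heval : Continuous fun T : X →L[ℝ] Y => T (h n) :=
        (ContinuousLinearMap.apply ℝ Y (h n)).continuous
      exact heval.continuousAt.comp h1
    exact (h2.norm).continuousWithinAt
  -- choose maximising parameters
  have hex : ∀ n : ℕ, ∃ t ∈ Icc (0:ℝ) 1, ∀ s ∈ Icc (0:ℝ) 1,
      ‖(f' (x₀ + s • h n)) (h n)‖ ≤ ‖(f' (x₀ + t • h n)) (h n)‖ := by
    intro n
    obtain ⟨tt, htt, hmax⟩ := isCompact_Icc.exists_isMaxOn (nonempty_Icc.2 zero_le_one) (hφcont n)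
    exact ⟨tt, htt, fun s hs => hmax hs⟩
  choose t htmem htmax using hex
  set c : ℕ → X := fun n => x₀ + t n • h n with hc
  have hcU : ∀ n, c n ∈ U := fun n => hzU n (t n) (htmem n)
  -- Mean value inequality
  have hMVT : ∀ n, ‖f (x n) - f x₀‖ ≤ ‖(f' (c n)) (h n)‖ := by
    intro n
    have hkey : ‖f (x₀ + (1:ℝ) • h n) - f (x₀ + (0:ℝ) • h n)‖ ≤
        ‖(f' (c n)) (h n)‖ := by
      apply norm_image_sub_le_of_norm_deriv_le_segment_01'
        (f := fun s : ℝ => f (x₀ + s • h n))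
        (f' := fun s : ℝ => (f' (x₀ + s • h n)) (h n))
      · intro s hs
        have hd : HasDerivAt (fun s : ℝ => x₀ + s • h n) (h n) s := by
          simpa using ((hasDerivAt_id s).smul_const (h n)).const_add x₀
        have := (hf.1 _ (hzU n s hs)).comp_hasDerivAt s hd
        exact this.hasDerivWithinAt
      · intro s hs
        exact htmax n s (Ico_subset_Icc_self hs)
    simpa [hh] using hkey
  -- the sequence `c` is `U`-bounded together with `x₀`
  have hcUB : UBounded U (Set.range c ∪ {x₀}) := by
    refine ⟨?_, ?_, r', hr'pos, ?_⟩
    · rintro z (⟨n, rfl⟩ | rfl)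
      · exact hcU n
      · exact hx₀U
    · rw [isBounded_iff_forall_norm_le]
      refine ⟨‖x₀‖ + M, ?_⟩
      rintro z (⟨n, rfl⟩ | rfl)
      · have h1 : ‖t n • h n‖ ≤ M := by
          rw [norm_smul, Real.norm_eq_abs, abs_of_nonneg (htmem n).1]
          calc t n * ‖h n‖ ≤ 1 * M :=
              mul_le_mul (htmem n).2 (hMb n) (norm_nonneg _) zero_le_one
            _ = M := one_mul M
        calc ‖c n‖ = ‖x₀ + t n • h n‖ := rfl
          _ ≤ ‖x₀‖ + ‖t n • h n‖ := norm_add_le _ _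
          _ ≤ ‖x₀‖ + M := by linarith
      · linarith [hMpos]
    · rintro b (⟨n, rfl⟩ | rfl)
      · intro y hy
        have hv : ‖y - c n‖ < r' := by
          rw [← dist_eq_norm]; exact Metric.mem_ball.1 hy
        have hid : y = (1 - t n) • (x₀ + (y - c n)) + t n • (x n + (y - c n)) := by
          have hcn : c n = x₀ + t n • (x n - x₀) := rfl
          rw [hcn]
          module
        rw [hid]
        refine hUc ?_ ?_ (by linarith [(htmem n).2]) (htmem n).1 (by ring)
        · apply hr₀
          rw [Metric.mem_ball, dist_eq_norm, add_sub_cancel_left]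
          exact lt_of_lt_of_le hv (min_le_right _ _)
        · apply hr (x n) (mem_range_self n)
          rw [Metric.mem_ball, dist_eq_norm, add_sub_cancel_left]
          exact lt_of_lt_of_le hv (min_le_left _ _)
      · intro y hy
        apply hr₀
        exact Metric.ball_subset_ball (min_le_right r r₀) hy
  -- `c` is weakly `p`-convergent to `x₀`
  have hcw : WeaklyLpConvergentTo p c x₀ := by
    intro g
    rw [if_neg hp']
    have hq : 0 < p.toReal := ENNReal.toReal_pos (lt_of_lt_of_le zero_lt_one hp).ne' hp'
    apply memℓp_gen
    apply Summable.of_nonneg_of_le (fun n => by positivity)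
      (fun n => ?_) ((hmemlp g).summable hq)
    simp only [hc, add_sub_cancel_left, map_smul]
    apply Real.rpow_le_rpow (norm_nonneg _) _ hq.le
    rw [smul_eq_mul, Real.norm_eq_abs, Real.norm_eq_abs, abs_mul]
    calc |t n| * |g (h n)| ≤ 1 * |g (h n)| := by
          apply mul_le_mul_of_nonneg_right _ (abs_nonneg _)
          rw [abs_of_nonneg (htmem n).1]; exact (htmem n).2
      _ = |g (h n)| := one_mul _
  -- apply the compactness hypothesis
  obtain ⟨hcomp, hScomp⟩ := H c x₀ hx₀U hcUB hcw
  -- key : ‖f' (c n) (h n)‖ → 0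
  have hkey : Tendsto (fun n => ‖(f' (c n)) (h n)‖) atTop (𝓝 0) := by
    rw [Metric.tendsto_atTop]
    intro ε hε
    set δ : ℝ := ε / (2 * M) with hδ
    have hδpos : 0 < δ := by positivity
    -- finite δ-net of the image, with centres in the image
    have hA : TotallyBounded (f' '' (Set.range c ∪ {x₀})) :=
      (hScomp.totallyBounded).subset subset_closure
    rw [totallyBounded_iff_subset] at hA
    obtain ⟨net, hnetsub, hnetfin, hnetcov⟩ :=
      hA _ (Metric.dist_mem_uniformity hδpos)
    -- each element of the net annihilates `h` in the limit
    have hnet0 : ∀ T ∈ net, Tendsto (fun n => ‖T (h n)‖) atTop (𝓝 0) := by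
      intro T hT
      obtain ⟨z, hz, rfl⟩ := hnetsub hT
      exact isCompactOperator_completely_continuous (hcomp z hz) hMb hw
    have hev : ∀ᶠ n in atTop, ∀ T ∈ net, ‖T (h n)‖ < ε / 2 :=
      (Filter.eventually_all_finite hnetfin).2 fun T hT =>
        (hnet0 T hT).eventually (gt_mem_nhds (by positivity : (0:ℝ) < ε / 2))
    obtain ⟨N, hN⟩ := Filter.eventually_atTop.1 hev
    refine ⟨N, fun n hn => ?_⟩
    have hmemA : f' (c n) ∈ f' '' (Set.range c ∪ {x₀}) :=
      mem_image_of_mem f' (Or.inl (mem_range_self n))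
    obtain ⟨T, hT, hdT⟩ := by
      have := hnetcov hmemA
      simpa only [mem_iUnion, mem_setOf_eq, exists_prop] using this
    have hbound : ‖(f' (c n)) (h n)‖ < ε := by
      calc ‖(f' (c n)) (h n)‖
          ≤ ‖(f' (c n) - T) (h n)‖ + ‖T (h n)‖ := by
            have : (f' (c n)) (h n) = (f' (c n) - T) (h n) + T (h n) := by simp
            rw [this]; exact norm_add_le _ _
        _ ≤ ‖f' (c n) - T‖ * ‖h n‖ + ‖T (h n)‖ := by
            have := (f' (c n) - T).le_opNorm (h n)
            linarith
        _ < δ * M + ε / 2 := by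
            have h1 : ‖f' (c n) - T‖ * ‖h n‖ < δ * M := by
              rcases eq_or_lt_of_le (norm_nonneg (f' (c n) - T)) with h0 | h0
              · rw [← h0, zero_mul]; positivity
              · calc ‖f' (c n) - T‖ * ‖h n‖ ≤ ‖f' (c n) - T‖ * M :=
                    mul_le_mul_of_nonneg_left (hMb n) (norm_nonneg _)
                  _ < δ * M := by
                    apply mul_lt_mul_of_pos_right _ hMpos
                    rw [← dist_eq_norm]; exact hdT
            exact add_lt_add_of_lt_of_le h1 (le_of_lt (hN n hn T hT))
        _ = ε / 2 + ε / 2 := by rw [hδ]; field_simp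
        _ = ε := by ring
    rw [Real.dist_eq, sub_zero, abs_of_nonneg (norm_nonneg _)]
    exact hbound
  -- conclude
  rw [tendsto_iff_norm_sub_tendsto_zero]
  exact squeeze_zero (fun n => norm_nonneg _) hMVT hkey
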